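/- Let Ξ = {(α,τ) ∈ ℝ × ℝ≥0 : τ ≤ l, w ≤ |α-1|, s ≤ (1-α)τ ≤ 1-d} ∪ {(1,τ) : 0 ≤ τ ≤ l} for constants l ≥ 0, w > 0, 0 < d < 1, s < 0. Then every critic φ_{(α,τ)}(x) = log(exp_α(τ(x-1))), viewed as a function on [0,1], is uniformly bounded over Ξ and uniformly Lipschitz: sup_{(α,τ)∈Ξ} ‖φ_{(α,τ)}‖_Lip ≤ L < ∞ for some finite L depending on l, d, s. -/
import Mathlib


/-- The `α`-exponential function. -/
noncomputable def expAlpha (α u : ℝ) : ℝ :=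
  if α = 1 then Real.exp u else (max (1 + (1 - α) * u) 0) ^ ((1 : ℝ) / (1 - α))

/-- The critic `φ_{(α,τ)}(x) = log(exp_α(τ(x-1)))` viewed as a function on `[0,1]`. -/
noncomputable def phiCritic (p : ℝ × ℝ) (x : ℝ) : ℝ :=
  Real.log (expAlpha p.1 (p.2 * (x - 1)))

/-- The parameter set `Ξ`. -/
def XiSet (l w d s : ℝ) : Set (ℝ × ℝ) :=
  {p | 0 ≤ p.2 ∧ p.2 ≤ l ∧ w ≤ |p.1 - 1| ∧
        s ≤ (1 - p.1) * p.2 ∧ (1 - p.1) * p.2 ≤ 1 - d}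
    ∪ {p | p.1 = 1 ∧ 0 ≤ p.2 ∧ p.2 ≤ l}

/-- every critic `φ_{(α,τ)}` with `(α,τ) ∈ Ξ` is uniformly bounded over
`Ξ` on `[0,1]`, and uniformly Lipschitz: `sup_{(α,τ)∈Ξ} ‖φ_{(α,τ)}‖_Lip ≤ L < ∞` for
some finite `L` depending on `l, d, s`. -/
theorem phiCritic_uniformly_bounded_and_lipschitz
    (l w d s : ℝ) (hl : 0 ≤ l) (hw : 0 < w) (hd0 : 0 < d) (hd1 : d < 1) (hs : s < 0) :
    (∃ a b : ℝ, ∀ p ∈ XiSet l w d s, ∀ x ∈ Set.Icc (0 : ℝ) 1,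
        phiCritic p x ∈ Set.Icc a b)
    ∧ ∃ L : NNReal, ∀ p ∈ XiSet l w d s,
        LipschitzOnWith L (phiCritic p) (Set.Icc (0 : ℝ) 1) := by
  set M : ℝ := (1 / w) * (|Real.log d| + Real.log (1 - s)) + l with hM
  have hlog1s : 0 ≤ Real.log (1 - s) := Real.log_nonneg (by linarith)
  have hMl : l ≤ M := by
    have : 0 ≤ (1 / w) * (|Real.log d| + Real.log (1 - s)) := by
      apply mul_nonneg (by positivity); positivity
    rw [hM]; linarith
  have key : ∀ p ∈ XiSet l w d s, ∀ x ∈ Set.Icc (0 : ℝ) 1,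
      phiCritic p x ∈ Set.Icc (-M) M := by
    rintro ⟨α, τ⟩ hp x hx
    obtain ⟨hx0, hx1⟩ := hx
    rcases hp with hp | hp
    · obtain ⟨hτ0, hτl, hαw, hcs, hcd⟩ := hp
      simp only at hτ0 hτl hαw hcs hcd
      have hα1 : α ≠ 1 := by
        intro h; rw [h] at hαw; simp at hαw; linarith
      have h1α : (1 : ℝ) - α ≠ 0 := by intro h; apply hα1; linarith
      set c : ℝ := (1 - α) * τ with hc
      set t : ℝ := 1 + c * (x - 1) with ht
      have htd : d ≤ t := by
        rcases le_or_gt 0 c with h | h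
        · nlinarith
        · nlinarith
      have hts : t ≤ 1 - s := by
        rcases le_or_gt 0 c with h | h
        · nlinarith
        · nlinarith
      have ht0 : 0 < t := lt_of_lt_of_le hd0 htd
      have hphi : phiCritic (α, τ) x = (1 / (1 - α)) * Real.log t := by
        simp only [phiCritic, expAlpha, if_neg hα1]
        rw [show (1 - α) * (τ * (x - 1)) = c * (x - 1) by ring,
          max_eq_left ht0.le, Real.log_rpow ht0]
      rw [hphi]
      have hlogt : |Real.log t| ≤ |Real.log d| + Real.log (1 - s) := by
        rcases le_or_gt 1 t with h | h
        · rw [abs_of_nonneg (Real.log_nonneg h)]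
          have := Real.log_le_log ht0 hts
          have := abs_nonneg (Real.log d)
          linarith
        · rw [abs_of_nonpos (Real.log_nonpos ht0.le h.le)]
          have h2 : Real.log d ≤ Real.log t := Real.log_le_log hd0 htd
          have h3 : Real.log d ≤ 0 := Real.log_nonpos hd0.le hd1.le
          rw [abs_of_nonpos h3]; linarith
      have hinva : |1 / (1 - α)| ≤ 1 / w := by
        rw [abs_div, abs_one]
        have hwa : w ≤ |1 - α| := by rwa [abs_sub_comm]
        exact one_div_le_one_div_of_le hw hwa
      have habs : |(1 / (1 - α)) * Real.log t| ≤ M := by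
        rw [abs_mul]
        calc |1 / (1 - α)| * |Real.log t|
            ≤ (1 / w) * (|Real.log d| + Real.log (1 - s)) :=
              mul_le_mul hinva hlogt (abs_nonneg _) (by positivity)
          _ ≤ M := by linarith
      constructor
      · linarith [neg_abs_le ((1 / (1 - α)) * Real.log t)]
      · linarith [le_abs_self ((1 / (1 - α)) * Real.log t)]
    · obtain ⟨hα, hτ0, hτl⟩ := hp
      simp only at hα hτ0 hτl
      have hphi : phiCritic (α, τ) x = τ * (x - 1) := by
        simp [phiCritic, expAlpha, hα]
      rw [hphi]
      constructor
      · nlinarith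
      · nlinarith
  refine ⟨⟨-M, M, key⟩, ⟨Real.toNNReal (l / d), ?_⟩⟩
  rintro ⟨α, τ⟩ hp
  have hld : 0 ≤ l / d := by positivity
  have hconv : Convex ℝ (Set.Icc (0:ℝ) 1) := convex_Icc 0 1
  rcases hp with hp | hp
  · obtain ⟨hτ0, hτl, hαw, hcs, hcd⟩ := hp
    simp only at hτ0 hτl hαw hcs hcd
    have hα1 : α ≠ 1 := by
      intro h; rw [h] at hαw; simp at hαw; linarith
    have h1α : (1 : ℝ) - α ≠ 0 := by intro h; apply hα1; linarith
    set c : ℝ := (1 - α) * τ with hc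
    have htd : ∀ x ∈ Set.Icc (0:ℝ) 1, d ≤ 1 + c * (x - 1) := by
      rintro x ⟨hx0, hx1⟩
      rcases le_or_gt 0 c with h | h
      · nlinarith
      · nlinarith
    have hEq : Set.EqOn (phiCritic (α, τ))
        (fun x => (1 / (1 - α)) * Real.log (1 + c * (x - 1))) (Set.Icc 0 1) := by
      intro x hx
      have ht0 : 0 < 1 + c * (x - 1) := lt_of_lt_of_le hd0 (htd x hx)
      simp only [phiCritic, expAlpha, if_neg hα1]
      rw [show (1 - α) * (τ * (x - 1)) = c * (x - 1) by ring,
        max_eq_left ht0.le, Real.log_rpow ht0]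
    have hlip : LipschitzOnWith (Real.toNNReal (l / d))
        (fun x => (1 / (1 - α)) * Real.log (1 + c * (x - 1))) (Set.Icc 0 1) := by
      apply hconv.lipschitzOnWith_of_nnnorm_hasDerivWithin_le
        (f' := fun x => (1 / (1 - α)) * (c / (1 + c * (x - 1))))
      · intro x hx
        have ht0 : 0 < 1 + c * (x - 1) := lt_of_lt_of_le hd0 (htd x hx)
        have h1 : HasDerivAt (fun x : ℝ => 1 + c * (x - 1)) c x := by
          simpa using (((hasDerivAt_id x).sub_const 1).const_mul c).const_add 1
        exact ((h1.log ht0.ne').const_mul (1 / (1 - α))).hasDerivWithinAt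
      · intro x hx
        have ht0 : 0 < 1 + c * (x - 1) := lt_of_lt_of_le hd0 (htd x hx)
        have heq : (1 / (1 - α)) * (c / (1 + c * (x - 1))) = τ / (1 + c * (x - 1)) := by
          rw [hc]; field_simp
        rw [← NNReal.coe_le_coe, coe_nnnorm, Real.coe_toNNReal _ hld,
          Real.norm_eq_abs, heq, abs_of_nonneg (div_nonneg hτ0 ht0.le)]
        exact div_le_div₀ hl hτl hd0 (htd x hx)
    intro x hx y hy
    rw [show phiCritic (α, τ) x = _ from hEq hx, show phiCritic (α, τ) y = _ from hEq hy]
    exact hlip hx hy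
  · obtain ⟨hα, hτ0, hτl⟩ := hp
    simp only at hα hτ0 hτl
    have hEq : Set.EqOn (phiCritic (α, τ)) (fun x => τ * (x - 1)) (Set.Icc 0 1) := by
      intro x _; simp [phiCritic, expAlpha, hα]
    have hlip : LipschitzOnWith (Real.toNNReal (l / d))
        (fun x : ℝ => τ * (x - 1)) (Set.Icc 0 1) := by
      apply hconv.lipschitzOnWith_of_nnnorm_hasDerivWithin_le (f' := fun _ => τ)
      · intro x _
        exact (((hasDerivAt_id x).sub_const 1).const_mul τ).hasDerivWithinAt.congr_deriv
          (by simp)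
      · intro x _
        rw [← NNReal.coe_le_coe, coe_nnnorm, Real.coe_toNNReal _ hld,
          Real.norm_eq_abs, abs_of_nonneg hτ0]
        calc τ ≤ l := hτl
          _ = l * 1 := (mul_one l).symm
          _ ≤ l * (1 / d) := by
              apply mul_le_mul_of_nonneg_left _ hl
              rw [le_div_iff₀ hd0]; linarith
          _ = l / d := by ring
    intro x hx y hy
    rw [show phiCritic (α, τ) x = _ from hEq hx, show phiCritic (α, τ) y = _ from hEq hy]
    exact hlip hx hy
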